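/- arXiv:1410.0024 — 8 statements merged into one kernel-verified Lean document; each statement's English description precedes it below -/
import Mathlib

section
/- Suppose ω satisfies Assumption (⋆). Then 𝒜_ω is closed under enlargement of sets: if I ∈ 𝒜_ω and I ⊆ J ⊆ {1,…,m}, then J ∈ 𝒜_ω. -/
/- Formalization of a statement from "The Crepant Transformation Conjecture
for Toric Complete Intersections" (Coates–Iritani–Jiang).

GIT data: `𝕃 = ℤ^r` (modelled by `Fin r → ℤ`), characters `D_1, …, D_m ∈ 𝕃^∨`
(modelled by `D : Fin m → Fin r → ℤ`, viewing `𝕃^∨ ⊗ ℝ` as `Fin r → ℝ`). -/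

open scoped Classical

noncomputable section

namespace CTC

/-- The image of the integral character `D i` in `𝕃^∨ ⊗ ℝ = ℝ^r`. -/
def DR {r m : ℕ} (D : Fin m → Fin r → ℤ) (i : Fin m) : Fin r → ℝ :=
  fun a => (D i a : ℝ)

/-- Integer pairing `v · e` between `𝕃^∨` and `𝕃`. -/
def pairZ {r : ℕ} (v e : Fin r → ℤ) : ℤ := ∑ a, v a * e a

/-- Real pairing `v · e` between `𝕃^∨ ⊗ ℝ` and `𝕃`. -/
def pairR {r : ℕ} (v : Fin r → ℝ) (e : Fin r → ℤ) : ℝ := ∑ a, v a * (e a : ℝ)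

/-- Rational pairing `D_i · f` between a character `D_i ∈ 𝕃^∨` and `f ∈ 𝕃 ⊗ ℚ`. -/
def dotDQ {r : ℕ} (Di : Fin r → ℤ) (f : Fin r → ℚ) : ℚ := ∑ a, (Di a : ℚ) * f a

/-- `∠_I := { Σ_{i ∈ I} a_i D_i : a_i ∈ ℝ, a_i > 0 }`; in particular `∠_∅ = {0}`. -/
def angleCone {m : ℕ} {E : Type*} [AddCommMonoid E] [Module ℝ E]
    (D : Fin m → E) (I : Finset (Fin m)) : Set E :=
  { w | ∃ a : Fin m → ℝ, (∀ i ∈ I, 0 < a i) ∧ w = ∑ i ∈ I, a i • D i }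

/-- The set of anticones `𝒜_ω := { I ⊆ {1,…,m} : ω ∈ ∠_I }`. -/
def anticones {r m : ℕ} (D : Fin m → Fin r → ℤ) (ω : Fin r → ℝ) :
    Set (Finset (Fin m)) :=
  { I | ω ∈ angleCone (DR D) I }

/-- The extended ample cone `C_ω := ⋂_{I ∈ 𝒜_ω} ∠_I`. -/
def extAmpleCone {r m : ℕ} (D : Fin m → Fin r → ℤ) (ω : Fin r → ℝ) :
    Set (Fin r → ℝ) :=
  ⋂ I ∈ anticones D ω, angleCone (DR D) I

/-- `U_ω := ⋃_{I ∈ 𝒜_ω} { z ∈ ℂ^m : z_i ≠ 0 for all i ∈ I }`. -/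
def Uset {r m : ℕ} (D : Fin m → Fin r → ℤ) (ω : Fin r → ℝ) : Set (Fin m → ℂ) :=
  ⋃ I ∈ anticones D ω, { z : Fin m → ℂ | ∀ i ∈ I, z i ≠ 0 }

/-- `S_ω := { i : {1,…,m} ∖ {i} ∉ 𝒜_ω }`. -/
def Sset {r m : ℕ} (D : Fin m → Fin r → ℤ) (ω : Fin r → ℝ) : Finset (Fin m) :=
  Finset.univ.filter fun i => Finset.univ.erase i ∉ anticones D ω

/-- Assumption (⋆): `{1,…,m} ∈ 𝒜_ω`, and for each `I ∈ 𝒜_ω` the set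
`{D_i : i ∈ I}` spans `𝕃^∨ ⊗ ℝ` over `ℝ`. -/
def AssumptionStar {r m : ℕ} (D : Fin m → Fin r → ℤ) (ω : Fin r → ℝ) : Prop :=
  Finset.univ ∈ anticones D ω ∧
    ∀ I ∈ anticones D ω, Submodule.span ℝ (DR D '' (I : Set (Fin m))) = ⊤

/-- Under Assumption (⋆), the set of anticones `𝒜_ω` is closed under
enlargement: if `I ∈ 𝒜_ω` and `I ⊆ J ⊆ {1,…,m}`, then `J ∈ 𝒜_ω`. -/
theorem anticones_closed_under_enlargement
    {r m : ℕ} (hr : 0 < r) (hrm : r ≤ m)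
    (D : Fin m → Fin r → ℤ) (ω : Fin r → ℝ)
    (hstar : AssumptionStar D ω)
    (I J : Finset (Fin m)) (hI : I ∈ anticones D ω) (hIJ : I ⊆ J) :
    J ∈ anticones D ω := by
  obtain ⟨a, ha, hω⟩ := hI
  rcases I.eq_empty_or_nonempty with hIe | hne
  · exfalso
    have h := hstar.2 I ⟨a, ha, hω⟩
    rw [hIe] at h
    simp only [Finset.coe_empty, Set.image_empty, Submodule.span_empty] at h
    have h1 : ((fun _ => (1:ℝ)) : Fin r → ℝ) ∈ (⊥ : Submodule ℝ (Fin r → ℝ)) := by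
      rw [h]; trivial
    have := congrFun ((Submodule.mem_bot ℝ).mp h1) ⟨0, hr⟩
    simp at this
  · -- span and coefficients
    have hspan := hstar.2 I ⟨a, ha, hω⟩
    have hrep : ∀ j : Fin m, ∃ c : Fin m → ℝ, DR D j = ∑ i ∈ I, c i • DR D i := by
      intro j
      have hmem : DR D j ∈ Submodule.span ℝ (DR D '' (I : Set (Fin m))) := by
        rw [hspan]; trivial
      rw [Finsupp.mem_span_image_iff_linearCombination] at hmem
      obtain ⟨l, hl, hlt⟩ := hmem
      refine ⟨l, ?_⟩
      rw [← hlt, Finsupp.linearCombination_apply, Finsupp.sum]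
      refine Finset.sum_subset (fun i hi => hl hi) ?_
      intro i _ hi
      simp [Finsupp.notMem_support_iff.mp hi]
    choose c hc using hrep
    set S : Fin m → ℝ := fun i => ∑ j ∈ J \ I, c j i with hS
    set ε : ℝ := I.inf' hne (fun i => a i / (|S i| + 1)) with hε
    have hεpos : 0 < ε := by
      rw [hε, Finset.lt_inf'_iff]
      intro i hi
      exact div_pos (ha i hi) (by positivity)
    have hkey : ∀ i ∈ I, ε * S i < a i := by
      intro i hi
      have h1 : ε * S i ≤ ε * |S i| :=
        mul_le_mul_of_nonneg_left (le_abs_self _) hεpos.le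
      have h2 : ε * |S i| ≤ (a i / (|S i| + 1)) * |S i| :=
        mul_le_mul_of_nonneg_right (Finset.inf'_le _ hi) (abs_nonneg _)
      have h3 : (a i / (|S i| + 1)) * |S i| < (a i / (|S i| + 1)) * (|S i| + 1) :=
        mul_lt_mul_of_pos_left (lt_add_one _) (div_pos (ha i hi) (by positivity))
      have h4 : (a i / (|S i| + 1)) * (|S i| + 1) = a i :=
        div_mul_cancel₀ _ (by positivity)
      linarith
    refine ⟨fun i => if i ∈ I then a i - ε * S i else ε, ?_, ?_⟩
    · intro i hi
      by_cases h : i ∈ I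
      · simp only [h, if_true]
        linarith [hkey i h]
      · simp only [h, if_false]
        exact hεpos
    · rw [← Finset.sum_sdiff hIJ]
      have hL : ∀ j ∈ J \ I,
          (if j ∈ I then a j - ε * S j else ε) • DR D j = ε • DR D j := by
        intro j hj
        rw [if_neg (Finset.mem_sdiff.mp hj).2]
      have hR : ∀ i ∈ I,
          (if i ∈ I then a i - ε * S i else ε) • DR D i
            = a i • DR D i - (ε * S i) • DR D i := by
        intro i hi
        rw [if_pos hi, sub_smul]
      rw [Finset.sum_congr rfl hL, Finset.sum_congr rfl hR, Finset.sum_sub_distrib]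
      have hswap : ∑ i ∈ I, (ε * S i) • DR D i = ∑ j ∈ J \ I, ε • DR D j := by
        calc ∑ i ∈ I, (ε * S i) • DR D i
            = ∑ i ∈ I, ∑ j ∈ J \ I, (ε * c j i) • DR D i := by
              refine Finset.sum_congr rfl fun i _ => ?_
              rw [hS]
              simp only [Finset.mul_sum, ← Finset.sum_smul]
          _ = ∑ j ∈ J \ I, ∑ i ∈ I, (ε * c j i) • DR D i := Finset.sum_comm
          _ = ∑ j ∈ J \ I, ε • DR D j := by
              refine Finset.sum_congr rfl fun j _ => ?_
              rw [hc j, Finset.smul_sum]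
              exact Finset.sum_congr rfl fun i _ => by rw [smul_smul]
      rw [hswap, ← hω]
      abel

end CTC
end
end

section
/- In the wall-crossing setup: (a) if i ∈ S_+ ∩ S_-, ξ⁺ is an i-th splitting vector for ω_+, and ξ⁻ is an i-th splitting vector for ω_-, then v·ξ⁺ = v·ξ⁻ for every v ∈ W; (b) if i ∈ S_+ ∖ S_- and ξ⁺ is an i-th splitting vector for ω_+, then v·ξ⁺ = 0 for every v ∈ W, and the same holds with the roles of + and − exchanged. -/
/- Formalization of a statement from "The Crepant Transformation Conjecture
for Toric Complete Intersections" (Coates–Iritani–Jiang).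

GIT data: `𝕃 = ℤ^r` (modelled by `Fin r → ℤ`), characters `D_1, …, D_m ∈ 𝕃^∨`
(modelled by `D : Fin m → Fin r → ℤ`, viewing `𝕃^∨ ⊗ ℝ` as `Fin r → ℝ`). -/

open scoped Classical

noncomputable section

namespace CTC

/-- The wall `W = { v ∈ 𝕃^∨ ⊗ ℝ : v · e = 0 }`. -/
def wall {r : ℕ} (e : Fin r → ℤ) : Set (Fin r → ℝ) := { v | pairR v e = 0 }

/-- `M_+ := { i : D_i · e > 0 }`. -/
def Mplus {r m : ℕ} (D : Fin m → Fin r → ℤ) (e : Fin r → ℤ) : Finset (Fin m) :=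
  Finset.univ.filter fun i => 0 < pairZ (D i) e

/-- `M_- := { i : D_i · e < 0 }`. -/
def Mminus {r m : ℕ} (D : Fin m → Fin r → ℤ) (e : Fin r → ℤ) : Finset (Fin m) :=
  Finset.univ.filter fun i => pairZ (D i) e < 0

/-- `M_0 := { i : D_i · e = 0 }`. -/
def Mzero {r m : ℕ} (D : Fin m → Fin r → ℤ) (e : Fin r → ℤ) : Finset (Fin m) :=
  Finset.univ.filter fun i => pairZ (D i) e = 0

/-- The wall-crossing setup of §5.1 of the paper: two stability conditions
`ω_+`, `ω_-` satisfying Assumption (⋆) whose chambers are separated by the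
wall `W = e^⊥`, satisfying the crepancy condition `Σ_i D_i · e = 0`, together
with a stability condition `ω₀` in the relative interior of the common facet
`W ∩ closure C_+ = W ∩ closure C_-` (which spans the hyperplane `W`). -/
structure WallCrossingSetup (r m : ℕ) where
  D : Fin m → Fin r → ℤ
  ωp : Fin r → ℝ
  ωm : Fin r → ℝ
  ω₀ : Fin r → ℝ
  e : Fin r → ℤ
  hr : 0 < r
  hrm : r ≤ m
  starP : AssumptionStar D ωp
  starM : AssumptionStar D ωm
  he : e ≠ 0
  posP : ∀ v ∈ extAmpleCone D ωp, 0 < pairR v e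
  negM : ∀ v ∈ extAmpleCone D ωm, pairR v e < 0
  crepant : (∑ i, pairZ (D i) e) = 0
  wallEq : wall e ∩ closure (extAmpleCone D ωp)
      = wall e ∩ closure (extAmpleCone D ωm)
  wallSpanEq : Submodule.span ℝ (wall e ∩ closure (extAmpleCone D ωp))
      = Submodule.span ℝ (wall e)
  interior₀ : ω₀ ∈ intrinsicInterior ℝ (wall e ∩ closure (extAmpleCone D ωp))

/-- `ξ ∈ 𝕃 ⊗ ℚ` is an `i`-th splitting vector for `ω`:
`D_i · ξ = 1`, `D_k · ξ ≤ 0` for `k ≠ i`, and `{ k : D_k · ξ ≥ 0 } ∈ 𝒜_ω`. -/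
def IsSplittingVector {r m : ℕ} (D : Fin m → Fin r → ℤ) (ω : Fin r → ℝ)
    (i : Fin m) (ξ : Fin r → ℚ) : Prop :=
  dotDQ (D i) ξ = 1 ∧ (∀ k : Fin m, k ≠ i → dotDQ (D k) ξ ≤ 0) ∧
    (Finset.univ.filter fun k => 0 ≤ dotDQ (D k) ξ) ∈ anticones D ω

/-- Pairing of `v ∈ 𝕃^∨ ⊗ ℝ` with `ξ ∈ 𝕃 ⊗ ℚ`. -/
def pairRQ {r : ℕ} (v : Fin r → ℝ) (ξ : Fin r → ℚ) : ℝ := ∑ a, v a * (ξ a : ℝ)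

/-- The pairing with a fixed `ξ ∈ 𝕃 ⊗ ℚ`, as a linear map. -/
def pairLin {r : ℕ} (ξ : Fin r → ℚ) : (Fin r → ℝ) →ₗ[ℝ] ℝ where
  toFun v := pairRQ v ξ
  map_add' u v := by simp [pairRQ, add_mul, Finset.sum_add_distrib]
  map_smul' c v := by simp [pairRQ, Finset.mul_sum, mul_assoc]

lemma pairLin_DR {r m : ℕ} (D : Fin m → Fin r → ℤ) (k : Fin m) (ξ : Fin r → ℚ) :
    pairLin ξ (DR D k) = ((dotDQ (D k) ξ : ℚ) : ℝ) := by
  simp only [pairLin, LinearMap.coe_mk, AddHom.coe_mk, pairRQ, DR, dotDQ]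
  push_cast
  ring

lemma nonneg_on_cone {r m : ℕ} {D : Fin m → Fin r → ℤ} {ξ : Fin r → ℚ}
    {v : Fin r → ℝ}
    (hv : v ∈ angleCone (DR D) (Finset.univ.filter fun k => 0 ≤ dotDQ (D k) ξ)) :
    0 ≤ pairLin ξ v := by
  obtain ⟨a, ha, rfl⟩ := hv
  rw [map_sum]
  apply Finset.sum_nonneg
  intro k hk
  rw [map_smul, smul_eq_mul, pairLin_DR]
  have h2 := (Finset.mem_filter.mp hk).2
  exact mul_nonneg (le_of_lt (ha k hk)) (by exact_mod_cast h2)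

lemma le_on_cone {r m : ℕ} {D : Fin m → Fin r → ℤ} {i : Fin m} {ξ ξ' : Fin r → ℚ}
    (h1 : dotDQ (D i) ξ = 1)
    (h1' : dotDQ (D i) ξ' ≤ 1) (h2' : ∀ k : Fin m, k ≠ i → dotDQ (D k) ξ' ≤ 0)
    {v : Fin r → ℝ}
    (hv : v ∈ angleCone (DR D) (Finset.univ.filter fun k => 0 ≤ dotDQ (D k) ξ)) :
    pairLin ξ' v ≤ pairLin ξ v := by
  obtain ⟨a, ha, rfl⟩ := hv
  rw [map_sum, map_sum]
  apply Finset.sum_le_sum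
  intro k hk
  rw [map_smul, map_smul, smul_eq_mul, smul_eq_mul, pairLin_DR, pairLin_DR]
  refine mul_le_mul_of_nonneg_left ?_ (le_of_lt (ha k hk))
  by_cases h : k = i
  · subst h
    exact_mod_cast h1'.trans_eq h1.symm
  · have hp := (Finset.mem_filter.mp hk).2
    exact_mod_cast (h2' k h).trans hp

lemma nonpos_on_erase_cone {r m : ℕ} {D : Fin m → Fin r → ℤ} {i : Fin m}
    {ξ : Fin r → ℚ} (h2 : ∀ k : Fin m, k ≠ i → dotDQ (D k) ξ ≤ 0)
    {v : Fin r → ℝ} (hv : v ∈ angleCone (DR D) (Finset.univ.erase i)) :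
    pairLin ξ v ≤ 0 := by
  obtain ⟨a, ha, rfl⟩ := hv
  rw [map_sum]
  apply Finset.sum_nonpos
  intro k hk
  rw [map_smul, smul_eq_mul, pairLin_DR]
  have hne : k ≠ i := Finset.ne_of_mem_erase hk
  exact mul_nonpos_of_nonneg_of_nonpos (le_of_lt (ha k hk))
    (by exact_mod_cast h2 k hne)

lemma nonpos_on_closure {r m : ℕ} {D : Fin m → Fin r → ℤ} {ω : Fin r → ℝ}
    {I : Finset (Fin m)} (hI : I ∈ anticones D ω) {L : (Fin r → ℝ) →ₗ[ℝ] ℝ}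
    (h : ∀ v ∈ angleCone (DR D) I, L v ≤ 0) :
    ∀ v ∈ closure (extAmpleCone D ω), L v ≤ 0 := by
  have hsub : closure (extAmpleCone D ω) ⊆ {v | L v ≤ 0} :=
    closure_minimal (fun u hu => h u (Set.biInter_subset_of_mem hI hu))
      (isClosed_le L.continuous_of_finiteDimensional continuous_const)
  exact fun v hv => hsub hv

lemma eq_on_wall {r m : ℕ} (W : WallCrossingSetup r m)
    {L : (Fin r → ℝ) →ₗ[ℝ] ℝ}
    (hp : ∀ v ∈ closure (extAmpleCone W.D W.ωp), 0 ≤ L v)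
    (hm : ∀ v ∈ closure (extAmpleCone W.D W.ωm), L v ≤ 0)
    {v : Fin r → ℝ} (hv : v ∈ wall W.e) : L v = 0 := by
  have hF : wall W.e ∩ closure (extAmpleCone W.D W.ωp)
      ⊆ (LinearMap.ker L : Set (Fin r → ℝ)) := by
    intro u hu
    have h1 : 0 ≤ L u := hp u hu.2
    have hu' : u ∈ wall W.e ∩ closure (extAmpleCone W.D W.ωm) := W.wallEq ▸ hu
    have h2 : L u ≤ 0 := hm u hu'.2
    exact LinearMap.mem_ker.mpr (le_antisymm h2 h1)
  have hspan : Submodule.span ℝ (wall W.e) ≤ LinearMap.ker L := by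
    rw [← W.wallSpanEq]
    exact Submodule.span_le.mpr hF
  exact LinearMap.mem_ker.mp (hspan (Submodule.subset_span hv))

lemma not_mem_Sset {r m : ℕ} {D : Fin m → Fin r → ℤ} {ω : Fin r → ℝ} {i : Fin m}
    (h : i ∉ Sset D ω) : Finset.univ.erase i ∈ anticones D ω := by
  by_contra hc
  exact h (Finset.mem_filter.mpr ⟨Finset.mem_univ i, hc⟩)

/-- Proposition 5.6 of the paper: (a) for `i ∈ S_+ ∩ S_-`, the splitting
vectors `ξ_i^+` and `ξ_i^-` have the same restriction to the wall `W`;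
(b) for `i ∈ S_± ∖ S_∓`, the splitting vector `ξ_i^±` restricts to zero on `W`. -/
theorem splitting_vectors_on_wall {r m : ℕ} (W : WallCrossingSetup r m) :
    (∀ i ∈ Sset W.D W.ωp ∩ Sset W.D W.ωm, ∀ ξp ξm : Fin r → ℚ,
        IsSplittingVector W.D W.ωp i ξp → IsSplittingVector W.D W.ωm i ξm →
        ∀ v ∈ wall W.e, pairRQ v ξp = pairRQ v ξm) ∧
    (∀ i ∈ Sset W.D W.ωp, i ∉ Sset W.D W.ωm →
        ∀ ξp : Fin r → ℚ, IsSplittingVector W.D W.ωp i ξp →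
        ∀ v ∈ wall W.e, pairRQ v ξp = 0) ∧
    (∀ i ∈ Sset W.D W.ωm, i ∉ Sset W.D W.ωp →
        ∀ ξm : Fin r → ℚ, IsSplittingVector W.D W.ωm i ξm →
        ∀ v ∈ wall W.e, pairRQ v ξm = 0) := by
  refine ⟨?_, ?_, ?_⟩
  · -- (a) : i ∈ S₊ ∩ S₋
    intro i _ ξp ξm hξp hξm v hv
    obtain ⟨hp1, hp2, hp3⟩ := hξp
    obtain ⟨hm1, hm2, hm3⟩ := hξm
    have key : (pairLin ξp - pairLin ξm) v = 0 := by
      refine eq_on_wall W ?_ ?_ hv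
      · -- 0 ≤ pairLin ξp - pairLin ξm on closure C₊
        have := nonpos_on_closure hp3 (L := pairLin ξm - pairLin ξp)
          (fun u hu => by
            have := le_on_cone hp1 (le_of_eq hm1) hm2 hu
            simpa [LinearMap.sub_apply] using sub_nonpos.mpr this)
        intro u hu
        have h := this u hu
        simp only [LinearMap.sub_apply] at h ⊢
        linarith
      · -- pairLin ξp - pairLin ξm ≤ 0 on closure C₋
        exact nonpos_on_closure hm3 (fun u hu => by
          have := le_on_cone hm1 (le_of_eq hp1) hp2 hu
          simpa [LinearMap.sub_apply] using sub_nonpos.mpr this)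
    have : pairLin ξp v - pairLin ξm v = 0 := by
      simpa [LinearMap.sub_apply] using key
    have hEq : pairLin ξp v = pairLin ξm v := by linarith
    exact hEq
  · -- (b) : i ∈ S₊ \ S₋
    intro i _ hiM ξp hξp v hv
    obtain ⟨hp1, hp2, hp3⟩ := hξp
    have key : pairLin ξp v = 0 := by
      refine eq_on_wall W (L := pairLin ξp) ?_ ?_ hv
      · intro u hu
        have := nonpos_on_closure hp3 (L := -pairLin ξp)
          (fun w hw => by
            have := nonneg_on_cone hw
            simpa using this) u hu
        simpa using this
      · exact nonpos_on_closure (not_mem_Sset hiM)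
          (fun u hu => nonpos_on_erase_cone hp2 hu)
    exact key
  · -- (c) : i ∈ S₋ \ S₊
    intro i _ hiP ξm hξm v hv
    obtain ⟨hm1, hm2, hm3⟩ := hξm
    have key : (-pairLin ξm) v = 0 := by
      refine eq_on_wall W (L := -pairLin ξm) ?_ ?_ hv
      · intro u hu
        have := nonpos_on_closure (not_mem_Sset hiP)
          (L := pairLin ξm) (fun w hw => nonpos_on_erase_cone hm2 hw) u hu
        simpa using this
      · intro u hu
        have := nonpos_on_closure hm3 (L := -pairLin ξm)
          (fun w hw => by
            have := nonneg_on_cone hw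
            simpa using this) u hu
        simpa using this
    exact (by simpa using key : pairLin ξm v = 0)

end CTC
end
end

section
/- Suppose ω satisfies Assumption (⋆). Set 𝕂 := {f ∈ 𝕃⊗ℚ : {i : D_i·f ∈ ℤ} ∈ 𝒜_ω}, let 𝕃̃ ⊆ 𝕃⊗ℚ be the ℤ-submodule generated by 𝕂, and 𝕃̃^∨ := {v ∈ 𝕃^∨⊗ℚ : v·f ∈ ℤ for all f ∈ 𝕃̃}. Then: (a) D_j ∈ 𝕃̃^∨ for every j ∈ S_ω; (b) if for each j ∈ S_ω a j-th splitting vector ξ_j for ω is given, then every v ∈ 𝕃̃^∨ can be written uniquely as v = w + Σ_{j∈S_ω} n_j D_j with all n_j ∈ ℤ and with w ∈ 𝕃̃^∨ satisfying w·ξ_j = 0 for all j ∈ S_ω; moreover necessarily n_j = v·ξ_j. -/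
/- Formalization of a statement from "The Crepant Transformation Conjecture
for Toric Complete Intersections" (Coates–Iritani–Jiang).

GIT data: `𝕃 = ℤ^r` (modelled by `Fin r → ℤ`), characters `D_1, …, D_m ∈ 𝕃^∨`
(modelled by `D : Fin m → Fin r → ℤ`, viewing `𝕃^∨ ⊗ ℝ` as `Fin r → ℝ`). -/

open scoped Classical

noncomputable section

namespace CTC

/-- `𝕂_ω := { f ∈ 𝕃 ⊗ ℚ : { i : D_i · f ∈ ℤ } ∈ 𝒜_ω }`. -/
def Kset {r m : ℕ} (D : Fin m → Fin r → ℤ) (ω : Fin r → ℝ) : Set (Fin r → ℚ) :=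
  { f | (Finset.univ.filter fun i => ∃ n : ℤ, dotDQ (D i) f = (n : ℚ)) ∈ anticones D ω }

/-- Rational pairing between `𝕃^∨ ⊗ ℚ` and `𝕃 ⊗ ℚ`. -/
def dotQQ {r : ℕ} (v f : Fin r → ℚ) : ℚ := ∑ a, v a * f a

/-- The image of `D j` in `𝕃^∨ ⊗ ℚ`. -/
def DQcast {r m : ℕ} (D : Fin m → Fin r → ℤ) (j : Fin m) : Fin r → ℚ :=
  fun a => (D j a : ℚ)

/-- `𝕃̃ ⊆ 𝕃 ⊗ ℚ`: the `ℤ`-submodule generated by `𝕂`. -/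
def LtildeSub {r m : ℕ} (D : Fin m → Fin r → ℤ) (ω : Fin r → ℝ) :
    Submodule ℤ (Fin r → ℚ) :=
  Submodule.span ℤ (Kset D ω)

/-- `𝕃̃^∨ := { v ∈ 𝕃^∨ ⊗ ℚ : v · f ∈ ℤ for all f ∈ 𝕃̃ }`. -/
def LtildeDual {r m : ℕ} (D : Fin m → Fin r → ℤ) (ω : Fin r → ℝ) :
    Set (Fin r → ℚ) :=
  { v | ∀ f ∈ LtildeSub D ω, ∃ n : ℤ, dotQQ v f = (n : ℚ) }

/-- The decomposition property: `v = w + Σ_{j ∈ S_ω} n_j D_j` with `n_j ∈ ℤ`,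
`w ∈ 𝕃̃^∨` and `w · ξ_j = 0` for all `j ∈ S_ω`. -/
def GoodDecomp {r m : ℕ} (D : Fin m → Fin r → ℤ) (ω : Fin r → ℝ)
    (ξ : Fin m → Fin r → ℚ) (v w : Fin r → ℚ) (n : Fin m → ℤ) : Prop :=
  w ∈ LtildeDual D ω ∧ (∀ j ∈ Sset D ω, dotQQ w (ξ j) = 0) ∧
    v = w + ∑ j ∈ Sset D ω, (n j : ℚ) • DQcast D j

/-! ### Pairing linearity -/

lemma dotQQ_add_right {r : ℕ} (v f g : Fin r → ℚ) :
    dotQQ v (f + g) = dotQQ v f + dotQQ v g := by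
  simp [dotQQ, mul_add, Finset.sum_add_distrib]

lemma dotQQ_zsmul_right {r : ℕ} (v : Fin r → ℚ) (z : ℤ) (f : Fin r → ℚ) :
    dotQQ v (z • f) = (z : ℚ) * dotQQ v f := by
  simp only [dotQQ, Pi.smul_apply, zsmul_eq_mul, Finset.mul_sum]
  exact Finset.sum_congr rfl fun a _ => by ring

lemma dotQQ_sub_left {r : ℕ} (v u f : Fin r → ℚ) :
    dotQQ (v - u) f = dotQQ v f - dotQQ u f := by
  simp [dotQQ, sub_mul, Finset.sum_sub_distrib]

lemma dotQQ_add_left {r : ℕ} (v u f : Fin r → ℚ) :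
    dotQQ (v + u) f = dotQQ v f + dotQQ u f := by
  simp [dotQQ, add_mul, Finset.sum_add_distrib]

lemma dotQQ_smul_left {r : ℕ} (q : ℚ) (v f : Fin r → ℚ) :
    dotQQ (q • v) f = q * dotQQ v f := by
  simp [dotQQ, Finset.mul_sum, mul_assoc]

lemma dotQQ_sum_left {r : ℕ} {ι : Type*} (s : Finset ι) (g : ι → Fin r → ℚ)
    (f : Fin r → ℚ) :
    dotQQ (∑ j ∈ s, g j) f = ∑ j ∈ s, dotQQ (g j) f := by
  simp only [dotQQ, Finset.sum_apply, Finset.sum_mul]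
  exact Finset.sum_comm

lemma dotDQ_eq {r m : ℕ} (D : Fin m → Fin r → ℤ) (j : Fin m) (f : Fin r → ℚ) :
    dotQQ (DQcast D j) f = dotDQ (D j) f := rfl

/-! ### Anticones are upward closed under (⋆) -/

lemma anticones_insert {r m : ℕ} (hr : 0 < r) {D : Fin m → Fin r → ℤ}
    {ω : Fin r → ℝ} (hstar : AssumptionStar D ω) {I : Finset (Fin m)}
    (hI : I ∈ anticones D ω) (j : Fin m) : insert j I ∈ anticones D ω := by
  by_cases hj : j ∈ I
  · rwa [Finset.insert_eq_self.mpr hj]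
  -- I is nonempty, since the D_i, i ∈ I, span a nontrivial space
  have hIne : I.Nonempty := by
    rcases I.eq_empty_or_nonempty with h | h
    · exfalso
      have hspan := hstar.2 I hI
      rw [h] at hspan
      simp only [Finset.coe_empty, Set.image_empty, Submodule.span_empty] at hspan
      have h01 : (fun _ : Fin r => (0 : ℝ)) ≠ fun _ => 1 := by
        intro hcontra
        exact zero_ne_one (congrFun hcontra ⟨0, hr⟩)
      have : Nontrivial (Fin r → ℝ) := ⟨_, _, h01⟩
      exact absurd hspan bot_ne_top
    · exact h
  have hDj : DR D j ∈ Submodule.span ℝ (DR D '' (I : Set (Fin m))) := by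
    rw [hstar.2 I hI]; trivial
  obtain ⟨a, hapos, haω⟩ := hI
  rw [Set.image_eq_range, Submodule.mem_span_range_iff_exists_fun] at hDj
  obtain ⟨c₀, hc₀⟩ := hDj
  set c : Fin m → ℝ := fun i => if h : i ∈ I then c₀ ⟨i, h⟩ else 0 with hc_def
  have hc : ∑ i ∈ I, c i • DR D i = DR D j := by
    rw [← Finset.sum_attach I (fun i => c i • DR D i)]
    simp only [hc_def, Finset.coe_mem, dif_pos]
    exact hc₀
  -- choose ε small
  set M : ℝ := I.sup' hIne (fun i => |c i|) with hM_def
  set A : ℝ := I.inf' hIne a with hA_def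
  have hM0 : 0 ≤ M := by
    obtain ⟨i, hi⟩ := hIne
    exact le_trans (abs_nonneg (c i)) (Finset.le_sup' (fun i => |c i|) hi)
  have hA0 : 0 < A := by
    rw [hA_def, Finset.lt_inf'_iff]
    exact hapos
  set ε : ℝ := A / (M + 1) with hε_def
  have hε0 : 0 < ε := div_pos hA0 (by linarith)
  have hkey : ∀ i ∈ I, ε * c i < a i := by
    intro i hi
    have h1 : c i ≤ M := le_trans (le_abs_self _) (Finset.le_sup' (fun i => |c i|) hi)
    have h2 : A ≤ a i := Finset.inf'_le _ hi
    have h3 : ε * c i ≤ ε * M := mul_le_mul_of_nonneg_left h1 (le_of_lt hε0)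
    have h4 : ε * M < A := by
      rw [hε_def, div_mul_eq_mul_div, div_lt_iff₀ (by linarith : (0:ℝ) < M + 1)]
      nlinarith
    linarith
  -- the new coefficients
  refine ⟨fun k => if k = j then ε else a k - ε * c k, ?_, ?_⟩
  · intro k hk
    rcases Finset.mem_insert.mp hk with h | h
    · simp [h, hε0]
    · have hkj : k ≠ j := fun e => hj (e ▸ h)
      simp only [if_neg hkj]
      have := hkey k h
      linarith
  · rw [Finset.sum_insert hj]
    beta_reduce
    rw [if_pos rfl]
    have hterm : ∀ i ∈ I, (if i = j then ε else a i - ε * c i) • DR D i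
        = a i • DR D i - ε • (c i • DR D i) := by
      intro i hi
      have hij : i ≠ j := fun e => hj (e ▸ hi)
      rw [if_neg hij, sub_smul, smul_smul]
    rw [Finset.sum_congr rfl hterm, Finset.sum_sub_distrib, ← Finset.smul_sum, hc, ← haω]
    abel

lemma anticones_up {r m : ℕ} (hr : 0 < r) {D : Fin m → Fin r → ℤ}
    {ω : Fin r → ℝ} (hstar : AssumptionStar D ω) {I J : Finset (Fin m)}
    (hI : I ∈ anticones D ω) (hIJ : I ⊆ J) : J ∈ anticones D ω := by
  have key : ∀ s : Finset (Fin m), I ∪ s ∈ anticones D ω := by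
    intro s
    induction s using Finset.induction_on with
    | empty => simpa using hI
    | @insert a s ha ih =>
        rw [Finset.union_insert]
        exact anticones_insert hr hstar ih a
  have := key J
  rwa [Finset.union_eq_right.mpr hIJ] at this

lemma Sset_mem_anticone {r m : ℕ} (hr : 0 < r) {D : Fin m → Fin r → ℤ}
    {ω : Fin r → ℝ} (hstar : AssumptionStar D ω) {j : Fin m}
    (hj : j ∈ Sset D ω) {I : Finset (Fin m)} (hI : I ∈ anticones D ω) : j ∈ I := by
  by_contra h
  have hsub : I ⊆ Finset.univ.erase j := fun k hk =>
    Finset.mem_erase.mpr ⟨fun e => h (e ▸ hk), Finset.mem_univ k⟩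
  exact (Finset.mem_filter.mp hj).2 (anticones_up hr hstar hI hsub)

/-! ### Membership in the dual lattice -/

lemma mem_dual_of {r m : ℕ} {D : Fin m → Fin r → ℤ} {ω : Fin r → ℝ}
    {v : Fin r → ℚ} (h : ∀ f ∈ Kset D ω, ∃ n : ℤ, dotQQ v f = (n : ℚ)) :
    v ∈ LtildeDual D ω := by
  intro f hf
  refine Submodule.span_induction (fun y hy => h y hy) ⟨0, by simp [dotQQ]⟩
    ?_ ?_ hf
  · rintro a b _ _ ⟨p, hp⟩ ⟨q, hq⟩
    exact ⟨p + q, by rw [dotQQ_add_right, hp, hq]; push_cast; ring⟩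
  · rintro z a _ ⟨p, hp⟩
    exact ⟨z * p, by rw [dotQQ_zsmul_right, hp]; push_cast; ring⟩

lemma DQ_mem_dual {r m : ℕ} (hr : 0 < r) {D : Fin m → Fin r → ℤ}
    {ω : Fin r → ℝ} (hstar : AssumptionStar D ω) {j : Fin m}
    (hj : j ∈ Sset D ω) : DQcast D j ∈ LtildeDual D ω := by
  apply mem_dual_of
  intro f hf
  have hjf := Sset_mem_anticone hr hstar hj hf
  obtain ⟨-, n, hn⟩ := Finset.mem_filter.mp hjf
  exact ⟨n, by rw [dotDQ_eq]; exact hn⟩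

lemma xi_mem_K {r m : ℕ} (hr : 0 < r) {D : Fin m → Fin r → ℤ}
    {ω : Fin r → ℝ} (hstar : AssumptionStar D ω) {j : Fin m} {ξj : Fin r → ℚ}
    (hs : IsSplittingVector D ω j ξj) : ξj ∈ Kset D ω := by
  obtain ⟨h1, h2, h3⟩ := hs
  refine anticones_up hr hstar h3 ?_
  intro k hk
  rw [Finset.mem_filter] at hk ⊢
  refine ⟨Finset.mem_univ _, ?_⟩
  by_cases hkj : k = j
  · exact ⟨1, by rw [hkj, h1]; norm_num⟩
  · have : dotDQ (D k) ξj = 0 := le_antisymm (h2 k hkj) hk.2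
    exact ⟨0, by rw [this]; norm_num⟩

lemma dot_xi {r m : ℕ} (hr : 0 < r) {D : Fin m → Fin r → ℤ}
    {ω : Fin r → ℝ} (hstar : AssumptionStar D ω) {ξ : Fin m → Fin r → ℚ}
    (hξ : ∀ j ∈ Sset D ω, IsSplittingVector D ω j (ξ j)) {j k : Fin m}
    (hj : j ∈ Sset D ω) (hk : k ∈ Sset D ω) :
    dotDQ (D j) (ξ k) = if j = k then 1 else 0 := by
  obtain ⟨h1, h2, h3⟩ := hξ k hk
  by_cases h : j = k
  · rw [if_pos h, h, h1]
  · have hge : 0 ≤ dotDQ (D j) (ξ k) := by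
      have hmem := Sset_mem_anticone hr hstar hj h3
      exact (Finset.mem_filter.mp hmem).2
    have hle := h2 j h
    rw [if_neg h, le_antisymm hle hge]

lemma pair_sum {r m : ℕ} (hr : 0 < r) {D : Fin m → Fin r → ℤ}
    {ω : Fin r → ℝ} (hstar : AssumptionStar D ω) {ξ : Fin m → Fin r → ℚ}
    (hξ : ∀ j ∈ Sset D ω, IsSplittingVector D ω j (ξ j)) (n : Fin m → ℤ)
    {k : Fin m} (hk : k ∈ Sset D ω) :
    dotQQ (∑ j ∈ Sset D ω, (n j : ℚ) • DQcast D j) (ξ k) = (n k : ℚ) := by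
  rw [dotQQ_sum_left]
  have hterm : ∀ j ∈ Sset D ω, dotQQ ((n j : ℚ) • DQcast D j) (ξ k)
      = (n j : ℚ) * (if j = k then 1 else 0) := by
    intro j hj
    rw [dotQQ_smul_left, dotDQ_eq, dot_xi hr hstar hξ hj hk]
  rw [Finset.sum_congr rfl hterm]
  simp [Finset.sum_ite_eq', hk]

lemma sum_mem_dual_pair {r m : ℕ} (hr : 0 < r) {D : Fin m → Fin r → ℤ}
    {ω : Fin r → ℝ} (hstar : AssumptionStar D ω) (n : Fin m → ℤ)
    {f : Fin r → ℚ} (hf : f ∈ LtildeSub D ω) :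
    ∃ q : ℤ, dotQQ (∑ j ∈ Sset D ω, (n j : ℚ) • DQcast D j) f = (q : ℚ) := by
  have h : ∀ j : Fin m, ∃ q : ℤ, j ∈ Sset D ω → dotQQ (DQcast D j) f = (q : ℚ) := by
    intro j
    by_cases hj : j ∈ Sset D ω
    · obtain ⟨q, hq⟩ := DQ_mem_dual hr hstar hj f hf
      exact ⟨q, fun _ => hq⟩
    · exact ⟨0, fun c => absurd c hj⟩
  choose q hq using h
  refine ⟨∑ j ∈ Sset D ω, n j * q j, ?_⟩
  rw [dotQQ_sum_left]
  push_cast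
  exact Finset.sum_congr rfl fun j hj => by rw [dotQQ_smul_left, hq j hj]

/-- Lemma 5.8 of the paper: (a) `D_j ∈ 𝕃̃^∨` for `j ∈ S_ω`; (b) given splitting
vectors `ξ_j` for `j ∈ S_ω`, every `v ∈ 𝕃̃^∨` decomposes uniquely as
`v = w + Σ_{j ∈ S_ω} n_j D_j` with `n_j ∈ ℤ`, `w ∈ 𝕃̃^∨`, `w · ξ_j = 0`;
moreover necessarily `n_j = v · ξ_j`. -/
theorem lattice_decomposition {r m : ℕ} (hr : 0 < r) (hrm : r ≤ m)
    (D : Fin m → Fin r → ℤ) (ω : Fin r → ℝ) (hstar : AssumptionStar D ω)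
    (ξ : Fin m → Fin r → ℚ)
    (hξ : ∀ j ∈ Sset D ω, IsSplittingVector D ω j (ξ j)) :
    (∀ j ∈ Sset D ω, DQcast D j ∈ LtildeDual D ω) ∧
    ∀ v ∈ LtildeDual D ω,
      (∃ w n, GoodDecomp D ω ξ v w n) ∧
      (∀ w n w' n', GoodDecomp D ω ξ v w n → GoodDecomp D ω ξ v w' n' →
        w = w' ∧ ∀ j ∈ Sset D ω, n j = n' j) ∧
      (∀ w n, GoodDecomp D ω ξ v w n →
        ∀ j ∈ Sset D ω, (n j : ℚ) = dotQQ v (ξ j)) := by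
  constructor
  · intro j hj
    exact DQ_mem_dual hr hstar hj
  · intro v hv
    have hξK : ∀ j ∈ Sset D ω, ξ j ∈ LtildeSub D ω := fun j hj =>
      Submodule.subset_span (xi_mem_K hr hstar (hξ j hj))
    have hnx : ∀ j : Fin m, ∃ q : ℤ, j ∈ Sset D ω → dotQQ v (ξ j) = (q : ℚ) := by
      intro j
      by_cases hj : j ∈ Sset D ω
      · obtain ⟨q, hq⟩ := hv (ξ j) (hξK j hj)
        exact ⟨q, fun _ => hq⟩
      · exact ⟨0, fun c => absurd c hj⟩
    choose nn hnn using hnx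
    have hnec : ∀ w n, GoodDecomp D ω ξ v w n →
        ∀ j ∈ Sset D ω, (n j : ℚ) = dotQQ v (ξ j) := by
      rintro w n ⟨hw, hw0, hdec⟩ j hj
      rw [hdec, dotQQ_add_left, hw0 j hj, pair_sum hr hstar hξ n hj, zero_add]
    refine ⟨?_, ?_, hnec⟩
    · refine ⟨v - ∑ j ∈ Sset D ω, (nn j : ℚ) • DQcast D j, nn, ?_, ?_, ?_⟩
      · intro f hf
        obtain ⟨p, hp⟩ := hv f hf
        obtain ⟨q, hq⟩ := sum_mem_dual_pair hr hstar nn hf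
        exact ⟨p - q, by rw [dotQQ_sub_left, hp, hq]; push_cast; ring⟩
      · intro j hj
        rw [dotQQ_sub_left, hnn j hj, pair_sum hr hstar hξ nn hj, sub_self]
      · abel
    · intro w n w' n' h1 h2
      have hn : ∀ j ∈ Sset D ω, n j = n' j := by
        intro j hj
        have := (hnec w n h1 j hj).trans (hnec w' n' h2 j hj).symm
        exact_mod_cast this
      have hsum : ∑ j ∈ Sset D ω, (n j : ℚ) • DQcast D j
          = ∑ j ∈ Sset D ω, (n' j : ℚ) • DQcast D j :=
        Finset.sum_congr rfl fun j hj => by rw [hn j hj]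
      have heq := h1.2.2.symm.trans h2.2.2
      rw [hsum] at heq
      exact ⟨add_right_cancel heq, hn⟩


end CTC
end
end

section
/- In the wall-crossing setup, let δ_+ ∈ 𝒜_+ and δ_- ∈ 𝒜_- be minimal anticones that are next to each other, and let j_- be the unique element of δ_- not in δ_+. Then for every j ∈ {1,…,m}: u_j(δ_+) = u_j(δ_-) + (D_j·e / D_{j_-}·e) · u_{j_-}(δ_+), as vectors in ℝ^m. -/
/- Formalization of a statement from "The Crepant Transformation Conjecture
for Toric Complete Intersections" (Coates–Iritani–Jiang).

GIT data: `𝕃 = ℤ^r` (modelled by `Fin r → ℤ`), characters `D_1, …, D_m ∈ 𝕃^∨`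
(modelled by `D : Fin m → Fin r → ℤ`, viewing `𝕃^∨ ⊗ ℝ` as `Fin r → ℝ`). -/

open scoped Classical

noncomputable section

namespace CTC

/-- The standard basis vector `λ_a` of `ℝ^m`. -/
def lamVec {m : ℕ} (a : Fin m) : Fin m → ℝ := Pi.single a 1

/-- `u_j(δ)` written out: `u_j(δ) = λ_j − Σ_{a ∈ δ} c_a λ_a`, where
`c : Fin m → ℝ` are the coefficients of `D_j` in the basis `{D_a : a ∈ δ}`
and `λ_1, …, λ_m` is the standard basis of `ℝ^m`. -/
def uvec {m : ℕ} (δ : Finset (Fin m)) (c : Fin m → ℝ) (j : Fin m) : Fin m → ℝ :=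
  lamVec j - ∑ a ∈ δ, c a • lamVec a

lemma pairR_DR {r m : ℕ} (D : Fin m → Fin r → ℤ) (i : Fin m) (e : Fin r → ℤ) :
    pairR (DR D i) e = (pairZ (D i) e : ℝ) := by
  simp [pairR, pairZ, DR]

lemma pairR_sum {r : ℕ} {ι : Type*} (e : Fin r → ℤ) (s : Finset ι) (c : ι → ℝ)
    (f : ι → Fin r → ℝ) :
    pairR (∑ i ∈ s, c i • f i) e = ∑ i ∈ s, c i * pairR (f i) e := by
  unfold pairR
  simp only [Finset.sum_apply, Pi.smul_apply, smul_eq_mul, Finset.sum_mul,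
    Finset.mul_sum]
  rw [Finset.sum_comm]
  exact Finset.sum_congr rfl fun i _ => Finset.sum_congr rfl fun a _ => by ring

lemma split_sum {ι : Type*} [DecidableEq ι] {M : Type*} [AddCommMonoid M] [Module ℝ M]
    (s t : Finset ι) (h : t ⊆ s) (tt : ℝ) (c1 c2 : ι → ℝ) (v : ι → M) :
    ∑ a ∈ s, (tt * c1 a + if a ∈ t then c2 a else 0) • v a
      = tt • ∑ a ∈ s, c1 a • v a + ∑ a ∈ t, c2 a • v a := by
  simp only [add_smul, ite_smul, zero_smul, mul_smul]
  rw [Finset.sum_add_distrib, Finset.sum_ite_mem, Finset.inter_eq_right.mpr h,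
    ← Finset.smul_sum]

/-- Lemma 6.8 of the paper: if the minimal anticones `δ_+ ∈ 𝒜_+` and
`δ_- ∈ 𝒜_-` are next to each other and `j_-` is the element of `δ_-` not in
`δ_+`, then for every `j`:
`u_j(δ_+) = u_j(δ_-) + (D_j·e / D_{j_-}·e) · u_{j_-}(δ_+)` in `ℝ^m`. -/
theorem fixed_point_weights {r m : ℕ} (W : WallCrossingSetup r m)
    (δp δm : Finset (Fin m))
    (hδp : δp ∈ anticones W.D W.ωp) (hδm : δm ∈ anticones W.D W.ωm)
    (hcardp : δp.card = r) (hcardm : δm.card = r)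
    (jp jm : Fin m) (hjp : jp ∉ δm) (hjm : jm ∉ δp)
    (hδpeq : δp = insert jp (δp ∩ δm)) (hδmeq : δm = insert jm (δp ∩ δm))
    (hwall : ∀ j ∈ δp ∩ δm, pairZ (W.D j) W.e = 0)
    (hjpe : 0 < pairZ (W.D jp) W.e) (hjme : pairZ (W.D jm) W.e < 0)
    (cp cm : Fin m → Fin m → ℝ)
    (hcp : ∀ j : Fin m, DR W.D j = ∑ a ∈ δp, cp j a • DR W.D a)
    (hcm : ∀ j : Fin m, DR W.D j = ∑ a ∈ δm, cm j a • DR W.D a) :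
    ∀ j : Fin m,
      uvec δp (cp j) j
        = uvec δm (cm j) j
            + ((pairZ (W.D j) W.e : ℝ) / (pairZ (W.D jm) W.e : ℝ))
                • uvec δp (cp jm) jm := by
  intro j
  set S : Finset (Fin m) := δp ∩ δm with hS
  have hSp : S ⊆ δp := Finset.inter_subset_left
  have hSm : S ⊆ δm := Finset.inter_subset_right
  have hjpS : jp ∉ S := fun h => hjp (hSm h)
  have hjmS : jm ∉ S := fun h => hjm (hSp h)
  have hjme' : (pairZ (W.D jm) W.e : ℝ) ≠ 0 := by exact_mod_cast hjme.ne
  set t : ℝ := (pairZ (W.D j) W.e : ℝ) / (pairZ (W.D jm) W.e : ℝ) with ht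
  -- pairing the expansion over δm with e
  have keyM : ∀ k : Fin m,
      (pairZ (W.D k) W.e : ℝ) = cm k jm * (pairZ (W.D jm) W.e : ℝ) := by
    intro k
    have h := congrArg (fun v => pairR v W.e) (hcm k)
    simp only [pairR_DR, pairR_sum] at h
    rw [h, hδmeq, Finset.sum_insert hjmS,
      Finset.sum_eq_zero (fun a ha => by
        rw [hwall a ha, Int.cast_zero, mul_zero]), add_zero]
  have hcmjm : cm j jm = t := by
    rw [ht, keyM j]; field_simp
  -- linear independence of {D_a : a ∈ δp}
  have hli : LinearIndependent ℝ (fun a : δp => DR W.D a) := by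
    apply linearIndependent_of_top_le_span_of_card_eq_finrank
    · have hre : Set.range (fun a : δp => DR W.D a) = DR W.D '' ↑δp := by
        ext x
        simp [Set.mem_image]
      rw [hre]
      exact (W.starP.2 δp hδp).ge
    · rw [Fintype.card_coe, hcardp, Module.finrank_fin_fun]
  -- expansion of D_j over δp in two ways
  have hsum : ∑ a ∈ δp, cp j a • DR W.D a
      = ∑ a ∈ δp, (t * cp jm a + if a ∈ S then cm j a else 0) • DR W.D a := by
    rw [← hcp j, split_sum δp S hSp t (cp jm) (cm j) (DR W.D), ← hcp jm]
    conv_lhs => rw [hcm j, hδmeq, Finset.sum_insert hjmS, hcmjm]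
  -- extract coefficients
  have hcoef : ∀ a ∈ δp,
      cp j a = t * cp jm a + if a ∈ S then cm j a else 0 := by
    have key := linearIndependent_iff'.mp hli Finset.univ
      (fun a : δp => cp j a - (t * cp jm a + if (a : Fin m) ∈ S then cm j a else 0))
      ?_
    · intro a ha
      have := key ⟨a, ha⟩ (Finset.mem_univ _)
      simp only at this
      linarith [this]
    · rw [Finset.univ_eq_attach,
        Finset.sum_attach δp
          (fun a => (cp j a - (t * cp jm a + if a ∈ S then cm j a else 0))
            • DR W.D a)]
      simp only [sub_smul, Finset.sum_sub_distrib, hsum, sub_self]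
  -- final vector identity
  unfold uvec
  have hA : ∑ a ∈ δp, cp j a • lamVec a
      = t • ∑ a ∈ δp, cp jm a • lamVec a + ∑ a ∈ S, cm j a • lamVec a := by
    rw [Finset.sum_congr rfl fun a ha => by rw [hcoef a ha]]
    exact split_sum δp S hSp t (cp jm) (cm j) lamVec
  have hB : ∑ a ∈ δm, cm j a • lamVec a
      = t • lamVec jm + ∑ a ∈ S, cm j a • lamVec a := by
    rw [hδmeq, Finset.sum_insert hjmS, hcmjm]
  rw [hA, hB]
  module

end CTC
end
end

section
/- In the wall-crossing setup, let δ_+ ∈ 𝒜_+ and δ_- ∈ 𝒜_- be minimal anticones that are next to each other, and let j_- be the unique element of δ_- not in δ_+. Then for every p ∈ 𝕃^∨⊗ℝ: i_{δ_+}^⋆θ(p) = i_{δ_-}^⋆θ(p) + (p·e / D_{j_-}·e) · u_{j_-}(δ_+), as vectors in ℝ^m. -/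
/- Formalization of a statement from "The Crepant Transformation Conjecture
for Toric Complete Intersections" (Coates–Iritani–Jiang).

GIT data: `𝕃 = ℤ^r` (modelled by `Fin r → ℤ`), characters `D_1, …, D_m ∈ 𝕃^∨`
(modelled by `D : Fin m → Fin r → ℤ`, viewing `𝕃^∨ ⊗ ℝ` as `Fin r → ℝ`). -/

open scoped Classical

noncomputable section

namespace CTC

/-- `i_δ^⋆ θ(p) := −Σ_{a ∈ δ} c_a λ_a`, where `c : Fin m → ℝ` are the
coefficients of `p` in the basis `{D_a : a ∈ δ}` and `λ_1, …, λ_m` is the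
standard basis of `ℝ^m`. -/
def ithetavec {m : ℕ} (δ : Finset (Fin m)) (c : Fin m → ℝ) : Fin m → ℝ :=
  -(∑ a ∈ δ, c a • lamVec a)

/-- Equation (6.9) of the paper: if the minimal anticones `δ_+ ∈ 𝒜_+` and
`δ_- ∈ 𝒜_-` are next to each other and `j_-` is the element of `δ_-` not in
`δ_+`, then for every `p ∈ 𝕃^∨ ⊗ ℝ`:
`i_{δ_+}^⋆θ(p) = i_{δ_-}^⋆θ(p) + (p·e / D_{j_-}·e) · u_{j_-}(δ_+)` in `ℝ^m`. -/
theorem fixed_point_theta_restriction {r m : ℕ} (W : WallCrossingSetup r m)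
    (δp δm : Finset (Fin m))
    (hδp : δp ∈ anticones W.D W.ωp) (hδm : δm ∈ anticones W.D W.ωm)
    (hcardp : δp.card = r) (hcardm : δm.card = r)
    (jp jm : Fin m) (hjp : jp ∉ δm) (hjm : jm ∉ δp)
    (hδpeq : δp = insert jp (δp ∩ δm)) (hδmeq : δm = insert jm (δp ∩ δm))
    (hwall : ∀ j ∈ δp ∩ δm, pairZ (W.D j) W.e = 0)
    (hjpe : 0 < pairZ (W.D jp) W.e) (hjme : pairZ (W.D jm) W.e < 0)
    (p : Fin r → ℝ) (cP cM djm : Fin m → ℝ)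
    (hcP : p = ∑ a ∈ δp, cP a • DR W.D a)
    (hcM : p = ∑ a ∈ δm, cM a • DR W.D a)
    (hdjm : DR W.D jm = ∑ a ∈ δp, djm a • DR W.D a) :
    ithetavec δp cP
      = ithetavec δm cM
          + (pairR p W.e / (pairZ (W.D jm) W.e : ℝ))
              • (lamVec jm + ithetavec δp djm) := by
  classical
  set S := δp ∩ δm with hS
  have hSsubp : S ⊆ δp := Finset.inter_subset_left
  have hSsubm : S ⊆ δm := Finset.inter_subset_right
  have hjpS : jp ∉ S := fun h => hjp (hSsubm h)
  have hjmS : jm ∉ S := fun h => hjm (hSsubp h)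
  have hjmδm : jm ∈ δm := by rw [hδmeq]; exact Finset.mem_insert_self _ _
  -- linear independence of the D_a, a ∈ δp
  have hli : LinearIndependent ℝ (fun a : δp => DR W.D a) := by
    apply linearIndependent_of_top_le_span_of_card_eq_finrank
    · have himg : DR W.D '' ↑δp = Set.range fun a : δp => DR W.D ↑a :=
        Set.image_eq_range _ _
      rw [← himg, W.starP.2 δp hδp]
    · rw [Module.finrank_fintype_fun_eq_card, Fintype.card_coe, hcardp, Fintype.card_fin]
  -- pairing with e of a sum
  have pairR_sum : ∀ (δ : Finset (Fin m)) (c : Fin m → ℝ),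
      pairR (∑ a ∈ δ, c a • DR W.D a) W.e = ∑ a ∈ δ, c a * (pairZ (W.D a) W.e : ℝ) := by
    intro δ c
    unfold pairR pairZ DR
    push_cast
    simp only [Finset.sum_apply, Pi.smul_apply, smul_eq_mul, Finset.sum_mul]
    rw [Finset.sum_comm]
    refine Finset.sum_congr rfl fun a _ => ?_
    rw [Finset.mul_sum]
    exact Finset.sum_congr rfl fun k _ => by ring
  have hZ : (pairZ (W.D jm) W.e : ℝ) ≠ 0 := by exact_mod_cast hjme.ne
  have hpe : pairR p W.e = cM jm * (pairZ (W.D jm) W.e : ℝ) := by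
    rw [hcM, pairR_sum, hδmeq, Finset.sum_insert hjmS]
    have h0 : ∑ a ∈ S, cM a * (pairZ (W.D a) W.e : ℝ) = 0 := by
      refine Finset.sum_eq_zero fun a ha => ?_
      rw [hwall a ha]; simp
    rw [h0, add_zero]
  have ht : pairR p W.e / (pairZ (W.D jm) W.e : ℝ) = cM jm := by
    rw [hpe, mul_div_assoc, div_self hZ, mul_one]
  -- second expansion of p in the basis indexed by δp
  have hcM' : p = ∑ a ∈ δp, (cM jm * djm a + (if a ∈ S then cM a else 0)) • DR W.D a := by
    rw [hcM, hδmeq, Finset.sum_insert hjmS, hdjm, Finset.smul_sum]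
    have h1 : ∑ a ∈ S, cM a • DR W.D a
        = ∑ a ∈ δp, (if a ∈ S then cM a else 0) • DR W.D a := by
      rw [← Finset.sum_subset hSsubp (fun x _ hx => by simp [hx])]
      exact Finset.sum_congr rfl fun a ha => by simp [ha]
    rw [h1, ← Finset.sum_add_distrib]
    exact Finset.sum_congr rfl fun a _ => by rw [add_smul, mul_smul]
  -- uniqueness of coefficients
  have hg : ∀ a ∈ δp, cP a = cM jm * djm a + (if a ∈ S then cM a else 0) := by
    intro a ha
    have hzero : ∑ b ∈ δp,
        (cP b - (cM jm * djm b + (if b ∈ S then cM b else 0))) • DR W.D b = 0 := by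
      simp only [sub_smul, Finset.sum_sub_distrib, ← hcP, ← hcM', sub_self]
    have hzero' : ∑ i : δp,
        (cP (i : Fin m) - (cM jm * djm (i : Fin m)
          + (if (i : Fin m) ∈ S then cM (i : Fin m) else 0))) • DR W.D (i : Fin m) = 0 := by
      rw [Finset.sum_coe_sort δp
        (fun b => (cP b - (cM jm * djm b + (if b ∈ S then cM b else 0))) • DR W.D b)]
      exact hzero
    have := Fintype.linearIndependent_iff.mp hli _ hzero' ⟨a, ha⟩
    linarith [this]
  -- componentwise verification
  funext k
  have comp : ∀ (δ : Finset (Fin m)) (c : Fin m → ℝ),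
      ithetavec δ c k = -(if k ∈ δ then c k else 0) := by
    intro δ c
    simp only [ithetavec, Pi.neg_apply, Finset.sum_apply, Pi.smul_apply, lamVec,
      Pi.single_apply, smul_eq_mul, mul_ite, mul_one, mul_zero, neg_inj]
    rw [Finset.sum_ite_eq δ k c]
  have hlam : lamVec jm k = if k = jm then 1 else 0 := by
    simp [lamVec, Pi.single_apply, eq_comm]
  simp only [Pi.add_apply, Pi.smul_apply, comp, hlam, smul_eq_mul, ht]
  by_cases hkp : k ∈ δp
  · have hknejm : k ≠ jm := fun h => hjm (h ▸ hkp)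
    have hkey := hg k hkp
    by_cases hkm : k ∈ δm
    · have hkS : k ∈ S := Finset.mem_inter.mpr ⟨hkp, hkm⟩
      simp only [hkp, hkm, hkS, if_true, hknejm, if_false] at *
      linarith [hkey]
    · have hkS : k ∉ S := fun h => hkm (hSsubm h)
      simp only [hkp, hkm, hkS, if_true, if_false, hknejm] at *
      linarith [hkey]
  · by_cases hkm : k ∈ δm
    · have hkjm : k = jm := by
        rcases Finset.mem_insert.mp (hδmeq ▸ hkm) with h | h
        · exact h
        · exact absurd (hSsubp h) hkp
      subst hkjm
      simp only [if_pos hjmδm, if_neg hjm, neg_zero, zero_add, if_true, eq_self_iff_true]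
      norm_num
    · have hknejm : k ≠ jm := fun h => hkm (h ▸ hjmδm)
      simp only [if_neg hkp, if_neg hkm, if_neg hknejm, neg_zero, zero_add]
      ring


end CTC
end
end

section
/- Let m ≥ 1 and e_1,…,e_m ∈ ℤ with e_1 + ⋯ + e_m = 0, and let c_1,…,c_m ∈ ℂ be such that c_j + k·e_j + ν ≠ 0 for every j with e_j > 0, every integer k ≥ 0, and every integer ν with 1 ≤ ν ≤ e_j. Define t_0 := 1 and, for each k ≥ 0, t_{k+1} := t_k · (∏_{j : e_j < 0} ∏_{ν=0}^{−e_j−1} (c_j + k·e_j − ν)) / (∏_{j : e_j > 0} ∏_{ν=1}^{e_j} (c_j + k·e_j + ν)). Then the power series Σ_{k≥0} t_k x^k has radius of convergence at least ∏_{j : e_j ≠ 0} |e_j|^{e_j}, which is a positive real number; in particular the series converges for every complex x with |x| < ∏_{j : e_j ≠ 0} |e_j|^{e_j}. -/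
/- Formalization of the analytic core of Lemma 5.5 of "The Crepant
Transformation Conjecture for Toric Complete Intersections": the fixed-point
restriction `Φ(β; x) = Σ_k t_k x^k` of the toric `I`-function has radius of
convergence at least the modulus `Π_{e_j ≠ 0} |e_j|^{e_j}` of the conifold
point. -/

noncomputable section

namespace CTC

open scoped Classical
open Filter Topology

private lemma tendsto_inv_natCast_complex :
    Filter.Tendsto (fun k : ℕ => ((k:ℂ))⁻¹) atTop (𝓝 0) := by
  rw [tendsto_zero_iff_norm_tendsto_zero]
  simp only [norm_inv, Complex.norm_natCast]
  exact tendsto_inv_atTop_zero.comp tendsto_natCast_atTop_atTop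

private lemma tendsto_affine_div (a b : ℂ) :
    Filter.Tendsto (fun k : ℕ => (b + (k:ℂ) * a) / k) atTop (𝓝 a) := by
  have h : Filter.Tendsto (fun k : ℕ => b * ((k:ℂ))⁻¹ + a) atTop (𝓝 a) := by
    simpa using (tendsto_inv_natCast_complex.const_mul b).add (tendsto_const_nhds (x := a))
  apply h.congr'
  filter_upwards [eventually_ge_atTop 1] with k hk
  have hk' : (k:ℂ) ≠ 0 := Nat.cast_ne_zero.mpr (by omega)
  field_simp

private lemma tendsto_prod_affine {m : ℕ} (e : Fin m → ℤ) (S : Finset (Fin m)) (n : Fin m → ℕ)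
    (b : Fin m → ℕ → ℂ) :
    Filter.Tendsto
      (fun k : ℕ => ∏ j ∈ S, ∏ ν ∈ Finset.range (n j), ((b j ν + (k:ℂ) * (e j : ℂ)) / k))
      atTop (𝓝 (∏ j ∈ S, ((e j : ℂ)) ^ (n j))) := by
  have h : Filter.Tendsto
      (fun k : ℕ => ∏ j ∈ S, ∏ ν ∈ Finset.range (n j), ((b j ν + (k:ℂ) * (e j : ℂ)) / k))
      atTop (𝓝 (∏ j ∈ S, ∏ ν ∈ Finset.range (n j), (e j : ℂ))) := by
    apply tendsto_finset_prod
    intro j _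
    apply tendsto_finset_prod
    intro ν _
    exact tendsto_affine_div _ _
  simpa using h

private lemma sum_toNat_eq {m : ℕ} (e : Fin m → ℤ) (hsum : (∑ j, e j) = 0) :
    (∑ j ∈ Finset.univ.filter (fun j => e j < 0), (-(e j)).toNat)
      = (∑ j ∈ Finset.univ.filter (fun j => 0 < e j), (e j).toNat) := by
  have h1 : ((∑ j ∈ Finset.univ.filter (fun j => e j < 0), (-(e j)).toNat : ℕ) : ℤ)
      = -∑ j ∈ Finset.univ.filter (fun j => e j < 0), (e j) := by
    push_cast
    rw [← Finset.sum_neg_distrib]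
    apply Finset.sum_congr rfl
    intro j hj
    simp only [Finset.mem_filter] at hj
    omega
  have h2 : ((∑ j ∈ Finset.univ.filter (fun j => 0 < e j), (e j).toNat : ℕ) : ℤ)
      = ∑ j ∈ Finset.univ.filter (fun j => 0 < e j), (e j) := by
    push_cast
    apply Finset.sum_congr rfl
    intro j hj
    simp only [Finset.mem_filter] at hj
    omega
  have hsplit := Finset.sum_filter_add_sum_filter_not Finset.univ (fun j => e j < 0) e
  have h4 : ∑ j ∈ Finset.univ.filter (fun j => ¬ e j < 0), e j
      = ∑ j ∈ Finset.univ.filter (fun j => 0 < e j), e j := by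
    symm
    apply Finset.sum_subset
    · intro j hj
      have h5 : 0 < e j := (Finset.mem_filter.mp hj).2
      exact Finset.mem_filter.mpr ⟨Finset.mem_univ j, by omega⟩
    · intro j hj hj2
      have h5 : ¬ e j < 0 := (Finset.mem_filter.mp hj).2
      have h6 : ¬ 0 < e j := fun h => hj2 (Finset.mem_filter.mpr ⟨Finset.mem_univ j, h⟩)
      omega
  rw [hsum, h4] at hsplit
  omega

theorem I_function_radius_of_convergence
    (m : ℕ) (hm : 1 ≤ m) (e : Fin m → ℤ) (hsum : (∑ j, e j) = 0)
    (c : Fin m → ℂ)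
    (hc : ∀ j : Fin m, 0 < e j → ∀ k : ℕ, ∀ ν : ℤ, 1 ≤ ν → ν ≤ e j →
      c j + (k : ℂ) * (e j : ℂ) + (ν : ℂ) ≠ 0)
    (t : ℕ → ℂ) (ht0 : t 0 = 1)
    (htrec : ∀ k : ℕ, t (k + 1) = t k *
      (∏ j ∈ Finset.univ.filter (fun j => e j < 0),
        ∏ ν ∈ Finset.range (-(e j)).toNat,
          (c j + (k : ℂ) * (e j : ℂ) - (ν : ℂ))) /
      (∏ j ∈ Finset.univ.filter (fun j => 0 < e j),
        ∏ ν ∈ Finset.range (e j).toNat,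
          (c j + (k : ℂ) * (e j : ℂ) + ((ν : ℂ) + 1)))) :
    0 < (∏ j ∈ Finset.univ.filter (fun j => e j ≠ 0), |(e j : ℝ)| ^ (e j)) ∧
    ∀ x : ℂ,
      ‖x‖
          < (∏ j ∈ Finset.univ.filter (fun j => e j ≠ 0), |(e j : ℝ)| ^ (e j)) →
      Summable (fun k : ℕ => t k * x ^ k) := by
  set Sn := Finset.univ.filter (fun j => e j < 0) with hSn
  set Sp := Finset.univ.filter (fun j => 0 < e j) with hSp
  set C : ℝ := ∏ j ∈ Finset.univ.filter (fun j => e j ≠ 0), |(e j : ℝ)| ^ (e j) with hC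
  -- positivity of C
  have hCpos : 0 < C := by
    apply Finset.prod_pos
    intro j hj
    simp only [Finset.mem_filter] at hj
    have : (0:ℝ) < |(e j : ℝ)| := by
      rw [abs_pos]; exact_mod_cast hj.2
    exact zpow_pos this _
  refine ⟨hCpos, ?_⟩
  set P : ℕ → ℂ := fun k => ∏ j ∈ Sn, ∏ ν ∈ Finset.range (-(e j)).toNat,
    (c j + (k : ℂ) * (e j : ℂ) - (ν : ℂ)) with hPdef
  set Q : ℕ → ℂ := fun k => ∏ j ∈ Sp, ∏ ν ∈ Finset.range (e j).toNat,
    (c j + (k : ℂ) * (e j : ℂ) + ((ν : ℂ) + 1)) with hQdef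
  have hNM : (∑ j ∈ Sn, (-(e j)).toNat) = ∑ j ∈ Sp, (e j).toNat := sum_toNat_eq e hsum
  set N : ℕ := ∑ j ∈ Sn, (-(e j)).toNat with hNdef
  have htrec' : ∀ k : ℕ, t (k + 1) = t k * P k / Q k := fun k => htrec k
  set L1 : ℂ := ∏ j ∈ Sn, ((e j : ℂ)) ^ ((-(e j)).toNat) with hL1def
  set L2 : ℂ := ∏ j ∈ Sp, ((e j : ℂ)) ^ ((e j).toNat) with hL2def
  -- tendsto of P k / k^N
  have hP : Filter.Tendsto (fun k : ℕ => P k / (k:ℂ)^N) atTop (𝓝 L1) := by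
    apply (tendsto_prod_affine e Sn (fun j => (-(e j)).toNat) (fun j ν => c j - (ν:ℂ))).congr
    intro k
    simp only [Finset.prod_div_distrib]
    congr 1
    · exact Finset.prod_congr rfl fun j _ => Finset.prod_congr rfl fun ν _ => by ring
    · simp only [Finset.prod_const, Finset.card_range]
      rw [Finset.prod_pow_eq_pow_sum]
  have hQt : Filter.Tendsto (fun k : ℕ => Q k / (k:ℂ)^N) atTop (𝓝 L2) := by
    apply (tendsto_prod_affine e Sp (fun j => (e j).toNat) (fun j ν => c j + (ν:ℂ) + 1)).congr
    intro k
    simp only [Finset.prod_div_distrib]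
    congr 1
    · exact Finset.prod_congr rfl fun j _ => Finset.prod_congr rfl fun ν _ => by ring
    · simp only [Finset.prod_const, Finset.card_range]
      rw [Finset.prod_pow_eq_pow_sum, ← hNM]
  have hL2ne : L2 ≠ 0 := by
    rw [hL2def]
    apply Finset.prod_ne_zero_iff.mpr
    intro j hj
    simp only [hSp, Finset.mem_filter] at hj
    exact pow_ne_zero _ (by exact_mod_cast hj.2.ne')
  have hQne : ∀ k, Q k ≠ 0 := by
    intro k
    rw [hQdef]
    apply Finset.prod_ne_zero_iff.mpr
    intro j hj
    apply Finset.prod_ne_zero_iff.mpr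
    intro ν hν
    simp only [hSp, Finset.mem_filter] at hj
    simp only [Finset.mem_range] at hν
    have := hc j hj.2 k ((ν:ℤ) + 1) (by omega) (by omega)
    convert this using 2
    push_cast
    ring
  -- ratio tendsto
  have hratio : Filter.Tendsto (fun k : ℕ => P k / Q k) atTop (𝓝 (L1 / L2)) := by
    apply (hP.div hQt hL2ne).congr'
    filter_upwards [eventually_ge_atTop 1] with k hk
    have hk' : ((k:ℂ))^N ≠ 0 := pow_ne_zero _ (Nat.cast_ne_zero.mpr (by omega))
    show P k / (k:ℂ)^N / (Q k / (k:ℂ)^N) = P k / Q k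
    rw [div_div_div_cancel_right₀ hk']
  have habs : Filter.Tendsto (fun k : ℕ => ‖P k‖ / ‖Q k‖) atTop
      (𝓝 (‖L1‖ / ‖L2‖)) := by
    have h := (continuous_norm.tendsto (L1 / L2)).comp hratio
    rw [show ‖L1 / L2‖ = ‖L1‖ / ‖L2‖ from norm_div _ _] at h
    exact h.congr fun k => norm_div _ _
  -- identify limit with 1/C
  set A : ℝ := ∏ j ∈ Sn, |(e j : ℝ)| ^ ((-(e j)).toNat) with hAdef
  set B : ℝ := ∏ j ∈ Sp, |(e j : ℝ)| ^ ((e j).toNat) with hBdef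
  have hAL1 : ‖L1‖ = A := by
    rw [hL1def, norm_prod]
    apply Finset.prod_congr rfl
    intro j _
    rw [norm_pow, Complex.norm_intCast]
  have hBL2 : ‖L2‖ = B := by
    rw [hL2def, norm_prod]
    apply Finset.prod_congr rfl
    intro j _
    rw [norm_pow, Complex.norm_intCast]
  have hApos : 0 < A := by
    apply Finset.prod_pos
    intro j hj
    simp only [hSn, Finset.mem_filter] at hj
    exact pow_pos (by rw [abs_pos]; exact_mod_cast hj.2.ne) _
  have hBpos : 0 < B := by
    apply Finset.prod_pos
    intro j hj
    simp only [hSp, Finset.mem_filter] at hj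
    exact pow_pos (by rw [abs_pos]; exact_mod_cast hj.2.ne') _
  have hCval : C = A⁻¹ * B := by
    have hun : Finset.univ.filter (fun j => e j ≠ 0) = Sn ∪ Sp := by
      ext j
      simp only [hSn, hSp, Finset.mem_filter, Finset.mem_union, Finset.mem_univ, true_and]
      omega
    have hdisj : Disjoint Sn Sp := by
      rw [Finset.disjoint_left]
      intro j h1 h2
      simp only [hSn, hSp, Finset.mem_filter] at h1 h2
      omega
    rw [hC, hun, Finset.prod_union hdisj]
    congr 1
    · rw [← Finset.prod_inv_distrib]
      apply Finset.prod_congr rfl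
      intro j hj
      simp only [hSn, Finset.mem_filter] at hj
      rw [← zpow_natCast, ← zpow_neg]
      congr 1
      omega
    · apply Finset.prod_congr rfl
      intro j hj
      simp only [hSp, Finset.mem_filter] at hj
      rw [← zpow_natCast]
      congr 1
      omega
  have hlim : ‖L1‖ / ‖L2‖ = 1 / C := by
    rw [hAL1, hBL2, hCval]
    field_simp
  -- summability
  intro x hx
  by_cases hz : ∀ k, t k ≠ 0
  · by_cases hx0 : x = 0
    · apply summable_of_ne_finset_zero (s := {0})
      intro k hk
      simp only [Finset.mem_singleton] at hk
      simp [hx0, zero_pow hk]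
    · apply summable_of_ratio_test_tendsto_lt_one (l := ‖x‖ / C)
      · rwa [div_lt_one hCpos]
      · exact Filter.Eventually.of_forall fun k =>
          mul_ne_zero (hz k) (pow_ne_zero _ hx0)
      · have heq : ∀ k : ℕ, ‖t (k+1) * x^(k+1)‖ / ‖t k * x^k‖
            = (‖P k‖ / ‖Q k‖) * ‖x‖ := by
          intro k
          rw [htrec' k]
          simp only [norm_mul, norm_div, norm_pow, pow_succ]
          have h1 : ‖t k‖ ≠ 0 := by
            simpa [norm_ne_zero_iff] using hz k
          have h2 : ‖x‖ ≠ 0 := by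
            simpa [norm_ne_zero_iff] using hx0
          have h3 : ‖Q k‖ ≠ 0 := by
            simpa [norm_ne_zero_iff] using hQne k
          field_simp
        have := habs.mul_const (‖x‖)
        rw [hlim] at this
        have heq2 : (1 / C) * ‖x‖ = ‖x‖ / C := by ring
        rw [heq2] at this
        exact this.congr fun k => (heq k).symm
  · push_neg at hz
    obtain ⟨k0, hk0⟩ := hz
    have hzero : ∀ k, k0 ≤ k → t k = 0 := by
      intro k hk
      induction k with
      | zero => simpa [Nat.le_zero.mp hk] using hk0
      | succ n ih =>
        rcases Nat.lt_or_ge k0 (n+1) with h | h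
        · rw [htrec n, ih (by omega)]
          ring
        · have : k0 = n + 1 := by omega
          rwa [← this]
    apply summable_of_ne_finset_zero (s := Finset.range (k0+1))
    intro k hk
    simp only [Finset.mem_range] at hk
    rw [hzero k (by omega)]
    ring

end CTC
end
end

section
/- Let r ≥ 1, e ∈ ℤ^r, let D'_1, …, D'_r ∈ ℤ^r be characters (those indexed by a minimal anticone δ_+), and let D_- ∈ ℤ^r with l := −(D_-·e) > 0. Define subgroups G := {h ∈ (ℂˣ)^r : χ_{D'_a}(h) = 1 for a = 1,…,r} of (ℂˣ)^r, and G̃ := {(g,λ) ∈ (ℂˣ)^r × ℂˣ : χ_{D'_a}(g)·λ^{−D'_a·e} = 1 for a = 1,…,r, and χ_{D_-}(g) = 1}. Then the map φ : G̃ → (ℂˣ)^r, φ(g,λ) := g·λ^{−e} (componentwise product), is a group homomorphism whose image is exactly G and whose kernel is {(λ^e, λ) : λ ∈ ℂˣ, λ^l = 1}; moreover this kernel is isomorphic to the cyclic group ℤ/lℤ of l-th roots of unity. -/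
/- Formalization of the group-theoretic content of Proposition 6.12(1) of
"The Crepant Transformation Conjecture for Toric Complete Intersections":
the isotropy group of a torus-fixed point of the common blow-up `X̃` is a
`μ_l`-extension of the isotropy group of the corresponding fixed point of
`X_+`. -/

noncomputable section

namespace CTC

/-- The character `χ_D : (ℂˣ)^r → ℂˣ`, `χ_D(g) := Π_a g_a^{D_a}`. -/
def chiD {r : ℕ} (Dv : Fin r → ℤ) (g : Fin r → ℂˣ) : ℂˣ := ∏ a, g a ^ Dv a

/-- The map `φ(g, λ) := g · λ^{−e}` (componentwise product). -/
def phiMap {r : ℕ} (e : Fin r → ℤ) (p : (Fin r → ℂˣ) × ℂˣ) : Fin r → ℂˣ :=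
  fun i => p.1 i * p.2 ^ (-e i)

/-- `G := { h ∈ (ℂˣ)^r : χ_{D'_a}(h) = 1 for all a }`. -/
def Gset {r : ℕ} (D' : Fin r → Fin r → ℤ) : Set (Fin r → ℂˣ) :=
  { h | ∀ a, chiD (D' a) h = 1 }

/-- `G̃ := { (g,λ) : χ_{D'_a}(g) λ^{−D'_a·e} = 1 for all a, and χ_{D_-}(g) = 1 }`. -/
def GtSet {r : ℕ} (D' : Fin r → Fin r → ℤ) (Dm e : Fin r → ℤ) :
    Set ((Fin r → ℂˣ) × ℂˣ) :=
  { p | (∀ a, chiD (D' a) p.1 * p.2 ^ (-(∑ b, D' a b * e b)) = 1) ∧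
      chiD Dm p.1 = 1 }

/-- The kernel of `φ` restricted to `G̃`. -/
def kerSet {r : ℕ} (D' : Fin r → Fin r → ℤ) (Dm e : Fin r → ℤ) :
    Set ((Fin r → ℂˣ) × ℂˣ) :=
  { p | p ∈ GtSet D' Dm e ∧ phiMap e p = 1 }

/-- Auxiliary: a product of integer powers of a fixed unit is the power of the sum. -/
lemma zpow_sum_aux {ι : Type*} (s : Finset ι) (f : ι → ℤ) (c : ℂˣ) :
    ∏ i ∈ s, c ^ f i = c ^ (∑ i ∈ s, f i) := by
  classical
  induction s using Finset.induction with
  | empty => simp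
  | @insert _ _ h ih => simp [Finset.prod_insert h, Finset.sum_insert h, zpow_add, ih]

/-- Auxiliary: the character of a rescaled point. -/
lemma chiD_mul_zpow {r : ℕ} (Dv e : Fin r → ℤ) (g : Fin r → ℂˣ) (lam : ℂˣ) :
    chiD Dv (fun i => g i * lam ^ e i)
      = chiD Dv g * lam ^ (∑ b, Dv b * e b) := by
  have hsum : (∑ i, e i * Dv i) = ∑ b, Dv b * e b :=
    Finset.sum_congr rfl fun b _ => mul_comm _ _
  simp only [chiD, mul_zpow, ← zpow_mul, Finset.prod_mul_distrib]
  rw [zpow_sum_aux, hsum]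

/-- Auxiliary: if `φ(p) = 1` then the first component is determined by the second. -/
lemma ker_fst {r : ℕ} (e : Fin r → ℤ) (p : (Fin r → ℂˣ) × ℂˣ)
    (h3 : phiMap e p = 1) (i : Fin r) : p.1 i = p.2 ^ e i := by
  have h0 : p.1 i * p.2 ^ (-e i) = 1 := congrFun h3 i
  have h1 : p.1 i = (p.2 ^ (-e i))⁻¹ := eq_inv_of_mul_eq_one_left h0
  rw [h1, ← zpow_neg, neg_neg]

/-- Auxiliary: the character of a pure scaling. -/
lemma chiD_zpow {r : ℕ} (Dv e : Fin r → ℤ) (lam : ℂˣ) :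
    chiD Dv (fun i => lam ^ e i) = lam ^ (∑ b, Dv b * e b) := by
  have := chiD_mul_zpow Dv e (fun _ => 1) lam
  simpa [chiD] using this

/-- Proposition 6.12(1): `φ : G̃ → (ℂˣ)^r`, `φ(g,λ) = g·λ^{−e}`, is a group
homomorphism with image exactly `G` and kernel `{(λ^e, λ) : λ^l = 1}`, which
is isomorphic to the cyclic group `ℤ/lℤ` of `l`-th roots of unity. -/
theorem gerbe_isotropy_extension
    (r : ℕ) (hr : 0 < r) (e : Fin r → ℤ)
    (D' : Fin r → Fin r → ℤ) (Dm : Fin r → ℤ)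
    (l : ℕ) (hl : 0 < l) (hDe : (∑ a, Dm a * e a) = -(l : ℤ)) :
    (∀ p q : (Fin r → ℂˣ) × ℂˣ, phiMap e (p * q) = phiMap e p * phiMap e q) ∧
    phiMap e '' GtSet D' Dm e = Gset D' ∧
    kerSet D' Dm e
      = { p | ∃ ζ : ℂˣ, ζ ^ l = 1 ∧ p = (fun i => ζ ^ e i, ζ) } ∧
    ∃ ψ : ZMod l → (Fin r → ℂˣ) × ℂˣ,
      Function.Injective ψ ∧
      (∀ a, ψ a ∈ kerSet D' Dm e) ∧
      (∀ x ∈ kerSet D' Dm e, ∃ a, ψ a = x) ∧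
      (∀ a b, ψ (a + b) = ψ a * ψ b) := by
  have hNe : NeZero l := ⟨hl.ne'⟩
  -- key computation : chiD of phiMap
  have key : ∀ (Dv : Fin r → ℤ) (p : (Fin r → ℂˣ) × ℂˣ),
      chiD Dv (phiMap e p) = chiD Dv p.1 * p.2 ^ (-(∑ b, Dv b * e b)) := by
    intro Dv p
    have hsum : (∑ b, Dv b * (-e b)) = -(∑ b, Dv b * e b) := by
      rw [← Finset.sum_neg_distrib]
      exact Finset.sum_congr rfl fun b _ => mul_neg _ _
    have := chiD_mul_zpow Dv (fun i => -e i) p.1 p.2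
    rw [hsum] at this
    exact this
  -- membership of pure scalings in the kernel
  have kerMem : ∀ ζ : ℂˣ, ζ ^ l = 1 →
      ((fun i => ζ ^ e i, ζ) : (Fin r → ℂˣ) × ℂˣ) ∈ kerSet D' Dm e := by
    intro ζ hζ
    have hζz : ζ ^ (-(l : ℤ)) = 1 := by
      rw [zpow_neg, zpow_natCast, hζ, inv_one]
    refine ⟨⟨?_, ?_⟩, ?_⟩
    · intro a
      rw [chiD_zpow, ← zpow_add, add_neg_cancel, zpow_zero]
    · rw [chiD_zpow, hDe, hζz]
    · funext i
      simp [phiMap, ← zpow_add]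
  -- elements of the kernel are pure scalings
  have kerShape : ∀ x ∈ kerSet D' Dm e,
      ∃ ζ : ℂˣ, ζ ^ l = 1 ∧ x = (fun i => ζ ^ e i, ζ) := by
    rintro x ⟨⟨h1, h2⟩, h3⟩
    refine ⟨x.2, ?_, ?_⟩
    · have hx1 : x.1 = fun i => x.2 ^ e i := funext (ker_fst e x h3)
      have : chiD Dm x.1 = x.2 ^ (∑ a, Dm a * e a) := by rw [hx1, chiD_zpow]
      rw [h2, hDe] at this
      have h5 : (x.2 ^ (-(l : ℤ)))⁻¹ = 1 := by rw [← this]; simp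
      rw [← zpow_neg, neg_neg, zpow_natCast] at h5
      exact h5
    · ext : 1
      · exact funext (ker_fst e x h3)
      · rfl
  refine ⟨?_, ?_, ?_, ?_⟩
  · intro p q
    funext i
    show p.1 i * q.1 i * (p.2 * q.2) ^ (-e i)
      = p.1 i * p.2 ^ (-e i) * (q.1 i * q.2 ^ (-e i))
    rw [mul_zpow, mul_mul_mul_comm]
  · -- image
    ext h
    constructor
    · rintro ⟨p, hp, rfl⟩
      intro a
      rw [key (D' a) p]
      exact hp.1 a
    · intro hh
      obtain ⟨z, hz⟩ := IsAlgClosed.exists_pow_nat_eq ((chiD Dm h : ℂˣ) : ℂ) hl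
      have hz0 : z ≠ 0 := by
        intro h0
        rw [h0, zero_pow hl.ne'] at hz
        exact (Units.ne_zero _) hz.symm
      set lam : ℂˣ := Units.mk0 z hz0 with hlam
      have hlamu : lam ^ l = chiD Dm h := by
        ext
        push_cast [hlam]
        exact hz
      refine ⟨(fun i => h i * lam ^ e i, lam), ⟨?_, ?_⟩, ?_⟩
      · intro a
        rw [chiD_mul_zpow, hh a, one_mul, ← zpow_add, add_neg_cancel, zpow_zero]
      · rw [chiD_mul_zpow, hDe, zpow_neg, zpow_natCast, hlamu, mul_inv_cancel]
      · funext i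
        simp [phiMap, mul_assoc, ← zpow_add]
  · -- kernel
    ext p
    constructor
    · intro hp
      exact kerShape p hp
    · rintro ⟨ζ, hζ, rfl⟩
      exact kerMem ζ hζ
  · -- μ_l structure
    have hc := Complex.isPrimitiveRoot_exp l hl.ne'
    set ζ₀ : ℂˣ := (hc.isUnit hl.ne').unit with hζ₀def
    have hζ₀ : IsPrimitiveRoot ζ₀ l := hc.isUnit_unit hl.ne'
    have hpowval : ∀ a b : ZMod l, ζ₀ ^ (a + b).val = ζ₀ ^ a.val * ζ₀ ^ b.val := by
      intro a b
      rw [← pow_add, ZMod.val_add, ← pow_eq_pow_mod _ hζ₀.pow_eq_one]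
    refine ⟨fun a => (fun i => (ζ₀ ^ a.val) ^ e i, ζ₀ ^ a.val), ?_, ?_, ?_, ?_⟩
    · intro a b hab
      have h2 : ζ₀ ^ a.val = ζ₀ ^ b.val := congrArg Prod.snd hab
      have := hζ₀.pow_inj (ZMod.val_lt a) (ZMod.val_lt b) h2
      exact ZMod.val_injective l this
    · intro a
      have hpow : (ζ₀ ^ a.val) ^ l = 1 := by
        rw [← pow_mul, mul_comm, pow_mul, hζ₀.pow_eq_one, one_pow]
      exact kerMem _ hpow
    · intro x hx
      obtain ⟨ζ, hζ, rfl⟩ := kerShape x hx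
      obtain ⟨k, hk, hkc⟩ := hc.eq_pow_of_pow_eq_one
        (show ((ζ : ℂ)) ^ l = 1 by rw [← Units.val_pow_eq_pow_val, hζ, Units.val_one])
      have hkx : ζ₀ ^ k = ζ := by
        ext
        push_cast [hζ₀def]
        exact hkc
      refine ⟨(k : ZMod l), ?_⟩
      have hval : ((k : ZMod l)).val = k := ZMod.val_natCast_of_lt hk
      show (fun i => (ζ₀ ^ (k : ZMod l).val) ^ e i, ζ₀ ^ (k : ZMod l).val) = _
      rw [hval, hkx]
    · intro a b
      ext : 1
      · funext i
        simp only [hpowval a b, Prod.fst_mul, Pi.mul_apply, mul_zpow]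
      · exact hpowval a b

end CTC
end
end

section
/- In the wall-crossing setup, let δ ∈ 𝒜_+ ∩ 𝒜_-. Then {d ∈ 𝕂_+ : D_j·d ∈ ℤ for every j ∈ δ} = {d ∈ 𝕂_- : D_j·d ∈ ℤ for every j ∈ δ}. -/
/- Formalization of a statement from "The Crepant Transformation Conjecture
for Toric Complete Intersections" (Coates–Iritani–Jiang).

GIT data: `𝕃 = ℤ^r` (modelled by `Fin r → ℤ`), characters `D_1, …, D_m ∈ 𝕃^∨`
(modelled by `D : Fin m → Fin r → ℤ`, viewing `𝕃^∨ ⊗ ℝ` as `Fin r → ℝ`). -/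

open scoped Classical

noncomputable section

namespace CTC

/-- Anticones are upward closed: if `δ ∈ 𝒜_ω` with `{D_i : i ∈ δ}` spanning,
then any `J ⊇ δ` is also an anticone. -/
lemma anticone_superset {r m : ℕ} (D : Fin m → Fin r → ℤ) (ω : Fin r → ℝ)
    (hr : 0 < r) {δ J : Finset (Fin m)} (hδ : δ ∈ anticones D ω)
    (hspan : Submodule.span ℝ (DR D '' (δ : Set (Fin m))) = ⊤)
    (hJ : δ ⊆ J) : J ∈ anticones D ω := by
  obtain ⟨a, ha, hω⟩ := hδ
  rcases δ.eq_empty_or_nonempty with h0 | hne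
  · exfalso
    subst h0
    simp only [Finset.coe_empty, Set.image_empty, Submodule.span_empty] at hspan
    haveI : Nonempty (Fin r) := Fin.pos_iff_nonempty.mp hr
    exact bot_ne_top hspan
  · set v : Fin r → ℝ := ∑ i ∈ J \ δ, DR D i with hv_def
    have hv : v ∈ Submodule.span ℝ (Set.range fun i : ↥(δ : Set (Fin m)) => DR D i) := by
      rw [← Set.image_eq_range, hspan]; trivial
    obtain ⟨c, hc⟩ := (Submodule.mem_span_range_iff_exists_fun ℝ).mp hv
    set b : Fin m → ℝ := fun i => if h : i ∈ δ then c ⟨i, h⟩ else 0 with hb_def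
    have hb : ∑ i ∈ δ, b i • DR D i = v := by
      rw [← hc, ← Finset.sum_coe_sort δ (fun i => b i • DR D i)]
      refine Finset.sum_congr rfl fun i _ => ?_
      simp [hb_def, i.2]
    set ε : ℝ := min 1 (δ.inf' hne fun i => a i / (|b i| + 1)) with hε_def
    have hε0 : 0 < ε := by
      refine lt_min one_pos ?_
      rw [Finset.lt_inf'_iff]
      intro i hi
      exact div_pos (ha i hi) (by positivity)
    have hεa : ∀ i ∈ δ, ε * b i < a i := by
      intro i hi
      have h1 : ε ≤ a i / (|b i| + 1) :=
        le_trans (min_le_right _ _) (Finset.inf'_le _ hi)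
      have h2 : ε * (|b i| + 1) ≤ a i := by
        rw [← div_mul_cancel₀ (a i) (show (|b i| + 1) ≠ 0 by positivity)]
        exact mul_le_mul_of_nonneg_right h1 (by positivity)
      calc ε * b i ≤ ε * |b i| := mul_le_mul_of_nonneg_left (le_abs_self _) hε0.le
        _ < ε * (|b i| + 1) := by nlinarith
        _ ≤ a i := h2
    refine ⟨fun i => if i ∈ δ then a i - ε * b i else ε, ?_, ?_⟩
    · intro i _
      by_cases hi : i ∈ δ
      · simpa [hi] using sub_pos.mpr (hεa i hi)
      · simpa [hi] using hε0
    · have h1 : ∑ i ∈ J \ δ, (if i ∈ δ then a i - ε * b i else ε) • DR D i = ε • v := by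
        rw [hv_def, Finset.smul_sum]
        refine Finset.sum_congr rfl fun i hi => ?_
        rw [Finset.mem_sdiff] at hi
        simp [hi.2]
      have h2 : ∑ i ∈ δ, (if i ∈ δ then a i - ε * b i else ε) • DR D i
          = (∑ i ∈ δ, a i • DR D i) - ε • v := by
        rw [← hb, Finset.smul_sum, ← Finset.sum_sub_distrib]
        refine Finset.sum_congr rfl fun i hi => ?_
        rw [if_pos hi, sub_smul, mul_smul]
      rw [← Finset.sum_sdiff hJ, h1, h2, hω]
      abel

/-- For a common anticone `δ ∈ 𝒜_+ ∩ 𝒜_-`, the summation sets of the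
restrictions to the corresponding fixed point of the `H`-functions of `X_+`
and `X_-` coincide:
`{d ∈ 𝕂_+ : D_j·d ∈ ℤ ∀ j ∈ δ} = {d ∈ 𝕂_- : D_j·d ∈ ℤ ∀ j ∈ δ}`. -/
theorem common_anticone_K_sets {r m : ℕ} (W : WallCrossingSetup r m)
    (δ : Finset (Fin m))
    (hδp : δ ∈ anticones W.D W.ωp) (hδm : δ ∈ anticones W.D W.ωm) :
    { d : Fin r → ℚ | d ∈ Kset W.D W.ωp ∧
        ∀ j ∈ δ, ∃ n : ℤ, dotDQ (W.D j) d = (n : ℚ) }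
      = { d : Fin r → ℚ | d ∈ Kset W.D W.ωm ∧
          ∀ j ∈ δ, ∃ n : ℤ, dotDQ (W.D j) d = (n : ℚ) } := by
  have key : ∀ (ω : Fin r → ℝ), δ ∈ anticones W.D ω → AssumptionStar W.D ω →
      ∀ d : Fin r → ℚ, (∀ j ∈ δ, ∃ n : ℤ, dotDQ (W.D j) d = (n : ℚ)) →
      d ∈ Kset W.D ω := by
    intro ω hδ hstar d hint
    refine anticone_superset W.D ω W.hr hδ (hstar.2 δ hδ) ?_
    intro j hj
    exact Finset.mem_filter.mpr ⟨Finset.mem_univ j, hint j hj⟩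
  ext d
  simp only [Set.mem_setOf_eq]
  constructor
  · rintro ⟨_, hint⟩
    exact ⟨key W.ωm hδm W.starM d hint, hint⟩
  · rintro ⟨_, hint⟩
    exact ⟨key W.ωp hδp W.starP d hint, hint⟩

end CTC
end
end
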